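/- For λ > 0 define W(x) := −((λ−2)/λ) x^{2−2/λ} + x^{2−4/λ} − 1 + ((λ−2)/λ) x^{−2/λ} + ((λ−1)(λ−2)/6) x³ (1 − x^{−2/λ})³ for x > 0. Then: (a) if λ > 2, W(x) ≥ 0 for all x ∈ (0, (λ/(λ−1))^{λ/2}); (b) if 4/3 ≤ λ < 2, W(x) ≤ 0 for all x ∈ (0, (λ/(λ−1))^{λ/2}). -/

import Mathlib

open Real Set

noncomputable def CWr (s τ : ℝ) : ℝ :=
  s * τ ^ (2*s-1) - (s-1) * τ ^ (2*s) - 1 + s - s * τ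

noncomputable def CWg (e c s τ : ℝ) : ℝ := e * (c * (1-τ)^3 - CWr s τ)

noncomputable def CWg1 (e c s τ : ℝ) : ℝ :=
  e * (c * (3 * (1-τ)^2 * (-1)) - (s * ((2*s-1) * τ ^ (2*s-2)) - (s-1) * ((2*s) * τ ^ (2*s-1)) - s))

noncomputable def CWg2 (e c s τ : ℝ) : ℝ :=
  e * (c * (6 * (1-τ)) - (s * ((2*s-1) * ((2*s-2) * τ ^ (2*s-3))) - (s-1) * ((2*s) * ((2*s-1) * τ ^ (2*s-2)))))

lemma hasDerivAt_CWg (e c s τ : ℝ) (hτ : τ ≠ 0) :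
    HasDerivAt (CWg e c s) (CWg1 e c s τ) τ := by
  have h1 : HasDerivAt (fun y : ℝ => (1-y)^3) (3 * (1-τ)^2 * (-1)) τ := by
    simpa using ((hasDerivAt_id τ).const_sub 1).fun_pow 3
  have h2 := Real.hasDerivAt_rpow_const (x := τ) (p := 2*s-1) (Or.inl hτ)
  have h3 := Real.hasDerivAt_rpow_const (x := τ) (p := 2*s) (Or.inl hτ)
  rw [show (2*s-1-1 : ℝ) = 2*s-2 from by ring] at h2
  have H := ((h1.const_mul c).sub
    (((((h2.const_mul s).sub (h3.const_mul (s-1))).sub_const 1).add_const s).sub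
      ((hasDerivAt_id τ).const_mul s))).const_mul e
  exact H.congr_deriv (by unfold CWg1; ring)

lemma hasDerivAt_CWg1 (e c s τ : ℝ) (hτ : τ ≠ 0) :
    HasDerivAt (CWg1 e c s) (CWg2 e c s τ) τ := by
  have h1 : HasDerivAt (fun y : ℝ => 3 * (1-y)^2 * (-1)) (6 * (1-τ)) τ := by
    have := (((hasDerivAt_id τ).const_sub 1).fun_pow 2).const_mul 3
    have h := this.mul_const (-1)
    refine h.congr_deriv ?_
    simp only [id_eq]; norm_num; ring
  have h2 := Real.hasDerivAt_rpow_const (x := τ) (p := 2*s-2) (Or.inl hτ)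
  have h3 := Real.hasDerivAt_rpow_const (x := τ) (p := 2*s-1) (Or.inl hτ)
  rw [show (2*s-2-1 : ℝ) = 2*s-3 from by ring] at h2
  rw [show (2*s-1-1 : ℝ) = 2*s-2 from by ring] at h3
  have H := ((h1.const_mul c).sub
    ((((h2.const_mul (2*s-1)).const_mul s).sub
      ((h3.const_mul (2*s)).const_mul (s-1))).sub_const s)).const_mul e
  exact H.congr_deriv (by unfold CWg2; ring)


lemma CWg_one (e c s : ℝ) : CWg e c s 1 = 0 := by
  simp [CWg, CWr, Real.one_rpow]

lemma CWg1_one (e c s : ℝ) : CWg1 e c s 1 = 0 := by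
  unfold CWg1
  rw [Real.one_rpow, Real.one_rpow]
  ring

/-- rewrite of the second derivative in factored form -/
lemma CWg2_eq (e s t τ : ℝ) (ht : 0 < t) (hτ : 0 < τ) :
    CWg2 e (s*(s-1)*(2*s-1)/3 / t ^ (s+1)) s τ
      = 6 * (e * (s*(s-1)*(2*s-1)/3)) * ((1-τ) * (1 / t ^ (s+1) - τ ^ (2*s-3))) := by
  have hsplit : τ ^ (2*s-2) = τ ^ (2*s-3) * τ := by
    rw [show (2*s-2 : ℝ) = 2*s-3+1 from by ring, Real.rpow_add_one hτ.ne']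
  unfold CWg2
  rw [hsplit]
  ring

lemma CW_core (s t : ℝ) (hs : 2/3 ≤ s) (ht : 0 < t) (e : ℝ)
    (heK : 0 ≤ e * (s*(s-1)*(2*s-1)/3)) :
    0 ≤ e * ((s*(s-1)*(2*s-1)/3) * (1-t)^3
      - t ^ (s+1) * (s * t ^ (2*s-1) - (s-1) * t ^ (2*s) - 1 + s - s * t)) := by
  set K : ℝ := s*(s-1)*(2*s-1)/3 with hK
  set c : ℝ := K / t ^ (s+1) with hc
  have htp : (0:ℝ) < t ^ (s+1) := Real.rpow_pos_of_pos ht _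
  -- main claim : 0 ≤ CWg e c s t
  have hmain : 0 ≤ CWg e c s t := by
    rcases le_total t 1 with ht1 | ht1
    · -- case t ≤ 1 : work on Icc t 1
      have hpos : ∀ τ ∈ Icc t 1, (0:ℝ) < τ := fun τ hτ => lt_of_lt_of_le ht hτ.1
      have hipos : ∀ τ ∈ Ioo t 1, (0:ℝ) < τ := fun τ hτ => ht.trans hτ.1
      -- g2 ≥ 0 on the interior
      have hg2 : ∀ τ ∈ Ioo t 1, 0 ≤ CWg2 e c s τ := by
        intro τ hτ
        have hτ0 : 0 < τ := hipos τ hτ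
        have hkey : τ ^ (2*s-3) * t ^ (s+1) ≤ 1 := by
          rcases le_total (2*s-3) 0 with h | h
          · have e1 : τ ^ (2*s-3) ≤ t ^ (2*s-3) :=
              Real.rpow_le_rpow_of_nonpos ht hτ.1.le h
            have e3 : t ^ (2*s-3) * t ^ (s+1) = t ^ (3*s-2) := by
              rw [← Real.rpow_add ht]; congr 1; ring
            have e4 : t ^ (3*s-2) ≤ 1 := Real.rpow_le_one ht.le ht1 (by linarith)
            calc τ ^ (2*s-3) * t ^ (s+1) ≤ t ^ (2*s-3) * t ^ (s+1) :=
                  mul_le_mul_of_nonneg_right e1 htp.le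
              _ = t ^ (3*s-2) := e3
              _ ≤ 1 := e4
          · have e1 : τ ^ (2*s-3) ≤ 1 := Real.rpow_le_one hτ0.le hτ.2.le h
            have e2 : t ^ (s+1) ≤ 1 := Real.rpow_le_one ht.le ht1 (by linarith)
            have e0 : (0:ℝ) ≤ τ ^ (2*s-3) := (Real.rpow_pos_of_pos hτ0 _).le
            nlinarith
        have h1 : τ ^ (2*s-3) ≤ 1 / t ^ (s+1) := (le_div_iff₀ htp).mpr hkey
        rw [hc, hK, CWg2_eq e s t τ ht hτ0, ← hK]
        have hprod : 0 ≤ (1-τ) * (1 / t ^ (s+1) - τ ^ (2*s-3)) :=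
          mul_nonneg (by linarith [hτ.2]) (by linarith)
        exact mul_nonneg (mul_nonneg (by norm_num) heK) hprod
      -- g1 is monotone on Icc t 1
      have hg1mono : MonotoneOn (CWg1 e c s) (Icc t 1) := by
        apply monotoneOn_of_deriv_nonneg (convex_Icc t 1)
        · exact fun τ hτ => (hasDerivAt_CWg1 e c s τ (hpos τ hτ).ne').continuousAt.continuousWithinAt
        · rw [interior_Icc]
          exact fun τ hτ => (hasDerivAt_CWg1 e c s τ (hipos τ hτ).ne').differentiableAt.differentiableWithinAt
        · rw [interior_Icc]
          intro τ hτ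
          rw [(hasDerivAt_CWg1 e c s τ (hipos τ hτ).ne').deriv]
          exact hg2 τ hτ
      have hone : (1:ℝ) ∈ Icc t 1 := ⟨ht1, le_rfl⟩
      have hg1np : ∀ τ ∈ Icc t 1, CWg1 e c s τ ≤ 0 := by
        intro τ hτ
        have := hg1mono hτ hone hτ.2
        rwa [CWg1_one] at this
      have hganti : AntitoneOn (CWg e c s) (Icc t 1) := by
        apply antitoneOn_of_deriv_nonpos (convex_Icc t 1)
        · exact fun τ hτ => (hasDerivAt_CWg e c s τ (hpos τ hτ).ne').continuousAt.continuousWithinAt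
        · rw [interior_Icc]
          exact fun τ hτ => (hasDerivAt_CWg e c s τ (hipos τ hτ).ne').differentiableAt.differentiableWithinAt
        · rw [interior_Icc]
          intro τ hτ
          rw [(hasDerivAt_CWg e c s τ (hipos τ hτ).ne').deriv]
          exact hg1np τ ⟨hτ.1.le, hτ.2.le⟩
      have := hganti ⟨le_rfl, ht1⟩ hone ht1
      rwa [CWg_one] at this
    · -- case 1 ≤ t : work on Icc 1 t
      have hpos : ∀ τ ∈ Icc 1 t, (0:ℝ) < τ := fun τ hτ => lt_of_lt_of_le one_pos hτ.1
      have hipos : ∀ τ ∈ Ioo 1 t, (0:ℝ) < τ := fun τ hτ => one_pos.trans hτ.1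
      have hg2 : ∀ τ ∈ Ioo 1 t, 0 ≤ CWg2 e c s τ := by
        intro τ hτ
        have hτ0 : 0 < τ := hipos τ hτ
        have hkey : 1 ≤ τ ^ (2*s-3) * t ^ (s+1) := by
          rcases le_total (2*s-3) 0 with h | h
          · have e1 : t ^ (2*s-3) ≤ τ ^ (2*s-3) :=
              Real.rpow_le_rpow_of_nonpos hτ0 hτ.2.le h
            have e3 : t ^ (2*s-3) * t ^ (s+1) = t ^ (3*s-2) := by
              rw [← Real.rpow_add ht]; congr 1; ring
            have e4 : 1 ≤ t ^ (3*s-2) := Real.one_le_rpow ht1 (by linarith)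
            calc (1:ℝ) ≤ t ^ (3*s-2) := e4
              _ = t ^ (2*s-3) * t ^ (s+1) := e3.symm
              _ ≤ τ ^ (2*s-3) * t ^ (s+1) := mul_le_mul_of_nonneg_right e1 htp.le
          · have e1 : 1 ≤ τ ^ (2*s-3) := Real.one_le_rpow hτ.1.le h
            have e2 : 1 ≤ t ^ (s+1) := Real.one_le_rpow ht1 (by linarith)
            nlinarith
        have h1 : 1 / t ^ (s+1) ≤ τ ^ (2*s-3) := (div_le_iff₀ htp).mpr (by linarith)
        rw [hc, hK, CWg2_eq e s t τ ht hτ0, ← hK]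
        have a1 : (0:ℝ) ≤ τ - 1 := by linarith [hτ.1]
        have a2 : (0:ℝ) ≤ τ ^ (2*s-3) - 1 / t ^ (s+1) := by linarith
        have hprod : 0 ≤ (1-τ) * (1 / t ^ (s+1) - τ ^ (2*s-3)) := by nlinarith [mul_nonneg a1 a2]
        exact mul_nonneg (mul_nonneg (by norm_num) heK) hprod
      have hg1mono : MonotoneOn (CWg1 e c s) (Icc 1 t) := by
        apply monotoneOn_of_deriv_nonneg (convex_Icc 1 t)
        · exact fun τ hτ => (hasDerivAt_CWg1 e c s τ (hpos τ hτ).ne').continuousAt.continuousWithinAt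
        · rw [interior_Icc]
          exact fun τ hτ => (hasDerivAt_CWg1 e c s τ (hipos τ hτ).ne').differentiableAt.differentiableWithinAt
        · rw [interior_Icc]
          intro τ hτ
          rw [(hasDerivAt_CWg1 e c s τ (hipos τ hτ).ne').deriv]
          exact hg2 τ hτ
      have hone : (1:ℝ) ∈ Icc 1 t := ⟨le_rfl, ht1⟩
      have hg1nn : ∀ τ ∈ Icc 1 t, 0 ≤ CWg1 e c s τ := by
        intro τ hτ
        have := hg1mono hone hτ hτ.1
        rwa [CWg1_one] at this
      have hgmono : MonotoneOn (CWg e c s) (Icc 1 t) := by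
        apply monotoneOn_of_deriv_nonneg (convex_Icc 1 t)
        · exact fun τ hτ => (hasDerivAt_CWg e c s τ (hpos τ hτ).ne').continuousAt.continuousWithinAt
        · rw [interior_Icc]
          exact fun τ hτ => (hasDerivAt_CWg e c s τ (hipos τ hτ).ne').differentiableAt.differentiableWithinAt
        · rw [interior_Icc]
          intro τ hτ
          rw [(hasDerivAt_CWg e c s τ (hipos τ hτ).ne').deriv]
          exact hg1nn τ ⟨hτ.1.le, hτ.2.le⟩
      have := hgmono hone ⟨ht1, le_rfl⟩ ht1
      rwa [CWg_one] at this
  -- convert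
  have heq : t ^ (s+1) * CWg e c s t
      = e * (K * (1-t)^3 - t ^ (s+1) * (s * t ^ (2*s-1) - (s-1) * t ^ (2*s) - 1 + s - s * t)) := by
    rw [CWg, CWr, hc]
    field_simp
  have := mul_nonneg htp.le hmain
  rw [heq] at this
  exact this

lemma CW_identity (lam : ℝ) (hl : 0 < lam) (x : ℝ) (hx : 0 < x) :
    -((lam - 2) / lam) * x ^ (2 - 2 / lam) + x ^ (2 - 4 / lam) - 1 +
        ((lam - 2) / lam) * x ^ (-(2 / lam)) +
        ((lam - 1) * (lam - 2) / 6) * x ^ (3 : ℕ) * (1 - x ^ (-(2 / lam))) ^ (3 : ℕ)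
    = (2/lam) * x ^ (3 : ℕ) *
      ((lam/2*(lam/2-1)*(2*(lam/2)-1)/3) * (1 - x ^ (-(2/lam)))^3
        - (x ^ (-(2/lam))) ^ (lam/2+1) *
          ((lam/2) * (x ^ (-(2/lam))) ^ (2*(lam/2)-1) - (lam/2-1) * (x ^ (-(2/lam))) ^ (2*(lam/2))
            - 1 + lam/2 - (lam/2) * x ^ (-(2/lam)))) := by
  have hl0 : lam ≠ 0 := hl.ne'
  have hx3 : (x:ℝ) ^ (3:ℕ) = x ^ ((3:ℕ):ℝ) := (Real.rpow_natCast x 3).symm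
  have p1 : (x ^ (-(2/lam))) ^ (lam/2+1) = x ^ (-(2/lam) * (lam/2+1)) :=
    (Real.rpow_mul hx.le _ _).symm
  have p2 : (x ^ (-(2/lam))) ^ (2*(lam/2)-1) = x ^ (-(2/lam) * (2*(lam/2)-1)) :=
    (Real.rpow_mul hx.le _ _).symm
  have p3 : (x ^ (-(2/lam))) ^ (2*(lam/2)) = x ^ (-(2/lam) * (2*(lam/2))) :=
    (Real.rpow_mul hx.le _ _).symm
  have q1 : x ^ (3:ℕ) * (x ^ (-(2/lam) * (lam/2+1)) * x ^ (-(2/lam) * (2*(lam/2)-1))) = 1 := by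
    rw [hx3, ← Real.rpow_add hx, ← Real.rpow_add hx,
      show ((3:ℕ):ℝ) + (-(2/lam) * (lam/2+1) + -(2/lam) * (2*(lam/2)-1)) = 0 from by
        push_cast; field_simp; ring]
    exact Real.rpow_zero x
  have q2 : x ^ (3:ℕ) * (x ^ (-(2/lam) * (lam/2+1)) * x ^ (-(2/lam) * (2*(lam/2)))) = x ^ (-(2/lam)) := by
    rw [hx3, ← Real.rpow_add hx, ← Real.rpow_add hx]
    congr 1
    push_cast; field_simp; ring
  have q3 : x ^ (3:ℕ) * x ^ (-(2/lam) * (lam/2+1)) = x ^ (2 - 2/lam) := by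
    rw [hx3, ← Real.rpow_add hx]
    congr 1
    push_cast; field_simp; ring
  have q4 : x ^ (3:ℕ) * (x ^ (-(2/lam) * (lam/2+1)) * x ^ (-(2/lam))) = x ^ (2 - 4/lam) := by
    rw [hx3, ← Real.rpow_add hx, ← Real.rpow_add hx]
    congr 1
    push_cast; field_simp; ring
  have hll : lam⁻¹ * lam = 1 := inv_mul_cancel₀ hl0
  rw [p1, p2, p3]
  linear_combination ((2/lam)*(lam/2)) * q1 - ((2/lam)*(lam/2-1)) * q2
    - ((2/lam)*(1-lam/2)) * q3 - ((2/lam)*(lam/2)) * q4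
    + (1 - x ^ (2-4/lam) - ((lam-1)*(lam-2)/6) * x ^ (3:ℕ) * (1 - x ^ (-(2/lam))) ^ (3:ℕ)) * hll


/-- The Chicone–Cima monotonicity quantity
`W(x) = -((λ-2)/λ)x^{2-2/λ} + x^{2-4/λ} - 1 + ((λ-2)/λ)x^{-2/λ}
  + ((λ-1)(λ-2)/6)x³(1 - x^{-2/λ})³`
satisfies: `W ≥ 0` on `(0, (λ/(λ-1))^{λ/2})` if `λ > 2`, and `W ≤ 0` there if `4/3 ≤ λ < 2`. -/
theorem chicone_cima_W_sign
    (lam : ℝ) (hlam : 0 < lam) (W : ℝ → ℝ)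
    (hW : ∀ x : ℝ, 0 < x → W x =
      -((lam - 2) / lam) * x ^ (2 - 2 / lam) + x ^ (2 - 4 / lam) - 1 +
        ((lam - 2) / lam) * x ^ (-(2 / lam)) +
        ((lam - 1) * (lam - 2) / 6) * x ^ (3 : ℕ) * (1 - x ^ (-(2 / lam))) ^ (3 : ℕ)) :
    (2 < lam → ∀ x ∈ Set.Ioo (0 : ℝ) ((lam / (lam - 1)) ^ (lam / 2)), 0 ≤ W x) ∧
    (4/3 ≤ lam → lam < 2 → ∀ x ∈ Set.Ioo (0 : ℝ) ((lam / (lam - 1)) ^ (lam / 2)), W x ≤ 0) := by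
  constructor
  · intro h2 x hx
    have hx0 : 0 < x := hx.1
    rw [hW x hx0, CW_identity lam hlam x hx0]
    have hcore := CW_core (lam/2) (x ^ (-(2/lam))) (by linarith)
      (Real.rpow_pos_of_pos hx0 _) 1
      (by nlinarith [mul_pos (mul_pos (by linarith : (0:ℝ) < lam/2)
        (by linarith : (0:ℝ) < lam/2-1)) (by linarith : (0:ℝ) < 2*(lam/2)-1)])
    rw [one_mul] at hcore
    have hA : (0:ℝ) ≤ 2/lam * x ^ (3:ℕ) := by positivity
    exact mul_nonneg hA hcore
  · intro h43 h2 x hx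
    have hx0 : 0 < x := hx.1
    rw [hW x hx0, CW_identity lam hlam x hx0]
    have hcore := CW_core (lam/2) (x ^ (-(2/lam))) (by linarith)
      (Real.rpow_pos_of_pos hx0 _) (-1)
      (by nlinarith [mul_nonneg (mul_nonneg (by linarith : (0:ℝ) ≤ lam/2)
        (by linarith : (0:ℝ) ≤ 2*(lam/2)-1)) (by linarith : (0:ℝ) ≤ 1-lam/2)])
    rw [neg_one_mul] at hcore
    have hB := neg_nonneg.mp hcore
    have hA : (0:ℝ) ≤ 2/lam * x ^ (3:ℕ) := by positivity
    exact mul_nonpos_iff.mpr (Or.inl ⟨hA, hB⟩)
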